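/- Let X ~ USh(ω,η) with ω > 0, η > 0. For every real t, E[e^{tX}] = (ω/(ω+3η))·Σ_{κ=0}^∞ (t^κ/κ!)·[ω/(κ+ω) + 2η/(κ+2ω) + 8ωη/(κ+2ω)²], and this series converges absolutely. -/

import Mathlib

open Real MeasureTheory Set intervalIntegral

-- basic rpow integral on (0,1]
lemma my_integral_rpow {a : ℝ} (ha : 0 < a) :
    ∫ x in (0:ℝ)..1, x ^ (a - 1) = 1 / a := by
  rw [integral_rpow (Or.inl (by linarith))]
  rw [Real.one_rpow, Real.zero_rpow (by linarith), sub_add_cancel]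
  ring

lemma my_intervalIntegrable_log_rpow {a : ℝ} (ha : 0 < a) :
    IntervalIntegrable (fun x => Real.log x * x ^ (a - 1)) volume 0 1 := by
  rw [intervalIntegrable_iff_integrableOn_Ioc_of_le zero_le_one]
  have hmeas : AEStronglyMeasurable (fun x => Real.log x * x ^ (a - 1))
      (volume.restrict (Ioc (0:ℝ) 1)) := by
    apply ContinuousOn.aestronglyMeasurable _ measurableSet_Ioc
    intro x hx
    exact ((Real.continuousOn_log.mono (by intro y hy; exact ne_of_gt hy.1)).mul
      (continuousOn_id.rpow_const (fun y hy => Or.inl (ne_of_gt hy.1)))) x hx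
  have hbound : IntegrableOn (fun x => (2/a) * x ^ (a/2 - 1)) (Ioc (0:ℝ) 1) volume := by
    have := (intervalIntegrable_rpow' (a := (0:ℝ)) (b := 1) (r := a/2 - 1)
      (by linarith)).const_mul (2/a)
    rwa [intervalIntegrable_iff_integrableOn_Ioc_of_le zero_le_one] at this
  refine Integrable.mono' hbound hmeas ?_
  filter_upwards [ae_restrict_mem measurableSet_Ioc] with x hx
  have hx0 : 0 < x := hx.1
  have key : |Real.log x * x ^ (a/2)| < 1 / (a/2) :=
    abs_log_mul_self_rpow_lt x (a/2) hx0 hx.2 (by linarith)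
  have hsplit : Real.log x * x ^ (a - 1) = (Real.log x * x ^ (a/2)) * x ^ (a/2 - 1) := by
    rw [mul_assoc, ← Real.rpow_add hx0]; ring_nf
  rw [Real.norm_eq_abs, hsplit, abs_mul]
  have h2 : |x ^ (a/2 - 1)| = x ^ (a/2 - 1) := abs_of_nonneg (Real.rpow_nonneg hx0.le _)
  rw [h2]
  have : (1 : ℝ) / (a/2) = 2/a := by field_simp
  calc |Real.log x * x ^ (a/2)| * x ^ (a/2-1) ≤ (1/(a/2)) * x ^ (a/2-1) := by
        exact mul_le_mul_of_nonneg_right key.le (Real.rpow_nonneg hx0.le _)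
    _ = (2/a) * x ^ (a/2 - 1) := by rw [this]

lemma my_integral_log_rpow {a : ℝ} (ha : 0 < a) :
    ∫ x in (0:ℝ)..1, Real.log x * x ^ (a - 1) = -(1 / a^2) := by
  have hF : ∀ x ∈ Ioo (0:ℝ) 1, HasDerivAt (fun x => x ^ a * (a * Real.log x - 1) / a^2)
      (Real.log x * x ^ (a - 1)) x := by
    intro x hx
    have hx0 : 0 < x := hx.1
    have h1 : HasDerivAt (fun x : ℝ => x ^ a) (a * x ^ (a-1)) x := by
      simpa [mul_comm] using Real.hasDerivAt_rpow_const (x := x) (p := a) (Or.inl hx0.ne')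
    have h2 : HasDerivAt (fun x : ℝ => a * Real.log x - 1) (a * (1/x)) x := by
      simpa using ((Real.hasDerivAt_log hx0.ne').const_mul a).sub_const 1
    have h3 := (h1.mul h2).div_const (a^2)
    convert h3 using 1
    · rfl
    · rfl
    · rfl
    have : x ^ a * (a * (1/x)) = a * x ^ (a - 1) := by
      rw [mul_comm a (1/x), ← mul_assoc, mul_one_div, ← Real.rpow_sub_one hx0.ne']
      ring
    rw [this]
    field_simp
    ring
  have htend0 : Filter.Tendsto (fun x => x ^ a * (a * Real.log x - 1) / a^2)
      (nhdsWithin 0 (Ioi 0)) (nhds 0) := by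
    have h := tendsto_log_mul_rpow_nhdsGT_zero ha
    have : Filter.Tendsto (fun x : ℝ => (a * (Real.log x * x ^ a) - x ^ a) / a^2)
        (nhdsWithin 0 (Ioi 0)) (nhds ((a * 0 - 0)/a^2)) := by
      apply Filter.Tendsto.div_const
      exact ((h.const_mul a).sub (by simpa [Real.zero_rpow ha.ne'] using ((Real.continuousAt_rpow_const 0 a (Or.inr ha.le)).continuousWithinAt (s := Ioi 0)).tendsto))
    simp only [mul_zero, zero_sub, neg_zero, zero_div] at this
    refine this.congr (fun x => by ring)
  have htend1 : Filter.Tendsto (fun x => x ^ a * (a * Real.log x - 1) / a^2)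
      (nhdsWithin 1 (Iio 1)) (nhds (-(1/a^2))) := by
    have hc : ContinuousAt (fun x : ℝ => x ^ a * (a * Real.log x - 1) / a^2) 1 := by
      apply ContinuousAt.div_const
      exact ((Real.continuousAt_rpow_const 1 a (Or.inl one_ne_zero)).mul
        (((Real.continuousAt_log one_ne_zero).const_mul a).sub continuousAt_const))
    have := hc.continuousWithinAt (s := Iio 1)
    simpa [Real.one_rpow, Real.log_one, ContinuousWithinAt, neg_div] using this
  have := intervalIntegral.integral_eq_sub_of_hasDerivAt_of_tendsto zero_lt_one
    hF (my_intervalIntegrable_log_rpow ha) htend0 htend1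
  rw [this]; ring

lemma my_integrableOn_rpow {a : ℝ} (ha : 0 < a) :
    IntegrableOn (fun x : ℝ => x ^ (a-1)) (Ioc (0:ℝ) 1) volume := by
  have := intervalIntegrable_rpow' (a := (0:ℝ)) (b := 1) (r := a - 1) (by linarith)
  rwa [intervalIntegrable_iff_integrableOn_Ioc_of_le zero_le_one] at this

theorem ush_mgf (ω η t : ℝ) (hω : 0 < ω) (hη : 0 < η) :
    Summable (fun κ : ℕ =>
      |t ^ κ / (κ.factorial : ℝ) *
        (ω / (κ + ω) + 2*η / (κ + 2*ω) + 8*ω*η / (κ + 2*ω) ^ 2)|) ∧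
    ∫ x in (0:ℝ)..1, Real.exp (t * x) *
        (ω / (ω + 3*η) * (ω * x ^ (ω-1) + (2*η - 8*ω*η*Real.log x) * x ^ (2*ω-1)))
    = ω / (ω + 3*η) * ∑' κ : ℕ, t ^ κ / (κ.factorial : ℝ) *
        (ω / (κ + ω) + 2*η / (κ + 2*ω) + 8*ω*η / (κ + 2*ω) ^ 2) := by
  set g : ℝ → ℝ := fun x => ω * x ^ (ω-1) + (2*η - 8*ω*η*Real.log x) * x ^ (2*ω-1) with hg
  set c : ℕ → ℝ := fun κ => t ^ κ / (κ.factorial : ℝ) with hc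
  set M : ℕ → ℝ := fun κ => ω / (κ + ω) + 2*η / (κ + 2*ω) + 8*ω*η / (κ + 2*ω) ^ 2 with hMdef
  have hκω : ∀ κ : ℕ, (0:ℝ) < κ + ω := fun κ => by positivity
  have hκ2ω : ∀ κ : ℕ, (0:ℝ) < κ + 2*ω := fun κ => by positivity
  -- nonnegativity of g on Ioc 0 1
  have hgnn : ∀ x ∈ Ioc (0:ℝ) 1, 0 ≤ g x := by
    intro x hx
    have hlog : Real.log x ≤ 0 := Real.log_nonpos hx.1.le hx.2
    have h1 : 0 ≤ ω * x ^ (ω-1) := mul_nonneg hω.le (Real.rpow_nonneg hx.1.le _)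
    have h2 : 0 ≤ (2*η - 8*ω*η*Real.log x) := by
      nlinarith [mul_nonneg (mul_nonneg hω.le hη.le) (neg_nonneg.2 hlog)]
    have h3 : 0 ≤ x ^ (2*ω-1) := Real.rpow_nonneg hx.1.le _
    have := mul_nonneg h2 h3
    simp only [hg]; linarith
  -- per-κ structure: the congruent decomposition on Ioc
  have hEq : ∀ κ : ℕ, EqOn (fun x : ℝ => x ^ κ * g x)
      (fun x : ℝ => ω * x ^ ((κ:ℝ) + ω - 1) +
        (2*η * x ^ ((κ:ℝ) + 2*ω - 1) +
          (-(8*ω*η)) * (Real.log x * x ^ ((κ:ℝ) + 2*ω - 1)))) (Ioc 0 1) := by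
    intro κ x hx
    have hx0 : 0 < x := hx.1
    have h1 : (x:ℝ) ^ κ * x ^ (ω-1) = x ^ ((κ:ℝ) + ω - 1) := by
      rw [← Real.rpow_natCast x κ, ← Real.rpow_add hx0]; ring_nf
    have h2 : (x:ℝ) ^ κ * x ^ (2*ω-1) = x ^ ((κ:ℝ) + 2*ω - 1) := by
      rw [← Real.rpow_natCast x κ, ← Real.rpow_add hx0]; ring_nf
    have expand : x ^ κ * g x
        = ω * (x ^ κ * x ^ (ω-1)) + (2*η * (x ^ κ * x ^ (2*ω-1)) +
          (-(8*ω*η)) * (Real.log x * (x ^ κ * x ^ (2*ω-1)))) := by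
      simp only [hg]; ring
    simp only [expand, h1, h2]
  -- integrability pieces
  have hI1 : ∀ κ : ℕ, IntegrableOn (fun x : ℝ => ω * x ^ ((κ:ℝ) + ω - 1)) (Ioc (0:ℝ) 1) volume :=
    fun κ => (my_integrableOn_rpow (hκω κ)).const_mul ω
  have hI2 : ∀ κ : ℕ, IntegrableOn (fun x : ℝ => 2*η * x ^ ((κ:ℝ) + 2*ω - 1)) (Ioc (0:ℝ) 1) volume :=
    fun κ => (my_integrableOn_rpow (hκ2ω κ)).const_mul (2*η)
  have hI3 : ∀ κ : ℕ, IntegrableOn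
      (fun x : ℝ => (-(8*ω*η)) * (Real.log x * x ^ ((κ:ℝ) + 2*ω - 1))) (Ioc (0:ℝ) 1) volume := by
    intro κ
    have := (my_intervalIntegrable_log_rpow (hκ2ω κ)).const_mul (-(8*ω*η))
    rwa [intervalIntegrable_iff_integrableOn_Ioc_of_le zero_le_one] at this
  -- integrability of x^κ * g x
  have hGint : ∀ κ : ℕ, IntegrableOn (fun x : ℝ => x ^ κ * g x) (Ioc (0:ℝ) 1) volume := by
    intro κ
    refine (((hI1 κ).add ((hI2 κ).add (hI3 κ))).congr ?_)
    filter_upwards [ae_restrict_mem measurableSet_Ioc] with x hx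
    exact (hEq κ hx).symm
  -- per-κ integral value
  have key : ∀ κ : ℕ, ∫ x in Ioc (0:ℝ) 1, x ^ κ * g x = M κ := by
    intro κ
    rw [setIntegral_congr_fun measurableSet_Ioc (hEq κ)]
    have hBC : IntegrableOn (fun x : ℝ => 2*η * x ^ ((κ:ℝ) + 2*ω - 1) +
        (-(8*ω*η)) * (Real.log x * x ^ ((κ:ℝ) + 2*ω - 1))) (Ioc (0:ℝ) 1) volume :=
      (hI2 κ).add (hI3 κ)
    rw [integral_add (hI1 κ) hBC, integral_add (hI2 κ) (hI3 κ),
      MeasureTheory.integral_const_mul, MeasureTheory.integral_const_mul, MeasureTheory.integral_const_mul]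
    have e1 : ∫ x in Ioc (0:ℝ) 1, x ^ ((κ:ℝ) + ω - 1) = 1 / ((κ:ℝ) + ω) := by
      rw [← intervalIntegral.integral_of_le zero_le_one]; exact my_integral_rpow (hκω κ)
    have e2 : ∫ x in Ioc (0:ℝ) 1, x ^ ((κ:ℝ) + 2*ω - 1) = 1 / ((κ:ℝ) + 2*ω) := by
      rw [← intervalIntegral.integral_of_le zero_le_one]; exact my_integral_rpow (hκ2ω κ)
    have e3 : ∫ x in Ioc (0:ℝ) 1, Real.log x * x ^ ((κ:ℝ) + 2*ω - 1)
        = -(1 / ((κ:ℝ) + 2*ω)^2) := by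
      rw [← intervalIntegral.integral_of_le zero_le_one]; exact my_integral_log_rpow (hκ2ω κ)
    rw [e1, e2, e3, hMdef]
    have h1 := (hκω κ).ne'
    have h2 := (hκ2ω κ).ne'
    field_simp
    ring
  -- M nonneg and bounded
  have hMnn : ∀ κ : ℕ, 0 ≤ M κ := by
    intro κ
    have h1 := hκω κ; have h2 := hκ2ω κ
    have : (0:ℝ) < ((κ:ℝ) + 2*ω)^2 := by positivity
    simp only [hMdef]
    positivity
  have hMbd : ∀ κ : ℕ, M κ ≤ 1 + 3*η/ω := by
    intro κ
    have hk : (0:ℝ) ≤ κ := Nat.cast_nonneg κ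
    have b1 : ω / ((κ:ℝ) + ω) ≤ 1 := by
      rw [div_le_one (hκω κ)]; linarith
    have b2 : 2*η / ((κ:ℝ) + 2*ω) ≤ η/ω := by
      rw [div_le_div_iff₀ (hκ2ω κ) hω]; nlinarith [mul_nonneg hη.le hk]
    have b3 : 8*ω*η / ((κ:ℝ) + 2*ω)^2 ≤ 2*η/ω := by
      rw [div_le_div_iff₀ (by positivity) hω]
      nlinarith [mul_nonneg (mul_nonneg hη.le hk) hk, mul_nonneg (mul_nonneg hη.le hk) hω.le]
    simp only [hMdef]
    have : η/ω + 2*η/ω = 3*η/ω := by ring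
    linarith
  -- summability of |c κ * M κ|
  have hcabs : ∀ κ : ℕ, |c κ| = |t| ^ κ / (κ.factorial : ℝ) := by
    intro κ
    simp only [hc]
    rw [abs_div, abs_pow, Nat.abs_cast]
  have hsum1 : Summable (fun κ : ℕ => |c κ * M κ|) := by
    refine Summable.of_nonneg_of_le (fun κ => abs_nonneg _) (fun κ => ?_)
      ((Real.summable_pow_div_factorial |t|).mul_right (1 + 3*η/ω))
    rw [abs_mul, abs_of_nonneg (hMnn κ), hcabs κ]
    have hb : 0 ≤ 1 + 3*η/ω := by positivity
    have := mul_le_mul_of_nonneg_left (hMbd κ) (by positivity : (0:ℝ) ≤ |t|^κ / κ.factorial)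
    linarith
  refine ⟨hsum1, ?_⟩
  -- the series F κ
  set F : ℕ → ℝ → ℝ := fun κ x => c κ * (x ^ κ * g x) with hF
  have hFint : ∀ κ : ℕ, Integrable (F κ) (volume.restrict (Ioc (0:ℝ) 1)) :=
    fun κ => (hGint κ).const_mul (c κ)
  have hFnorm : ∀ κ : ℕ, ∫ x in Ioc (0:ℝ) 1, ‖F κ x‖ = |c κ| * M κ := by
    intro κ
    have : EqOn (fun x => ‖F κ x‖) (fun x => |c κ| * (x ^ κ * g x)) (Ioc (0:ℝ) 1) := by
      intro x hx
      simp only [hF, Real.norm_eq_abs]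
      rw [abs_mul, abs_of_nonneg (mul_nonneg (pow_nonneg hx.1.le κ) (hgnn x hx))]
    rw [setIntegral_congr_fun measurableSet_Ioc this, MeasureTheory.integral_const_mul, key κ]
  have hFsum : Summable (fun κ : ℕ => ∫ x in Ioc (0:ℝ) 1, ‖F κ x‖) := by
    apply hsum1.congr
    intro κ
    rw [hFnorm κ, abs_mul, abs_of_nonneg (hMnn κ)]
  -- swap sum and integral
  have swap := integral_tsum_of_summable_integral_norm hFint hFsum
  -- pointwise sum equals exp(t x) * g x
  have hpt : ∀ x : ℝ, ∑' κ : ℕ, F κ x = Real.exp (t*x) * g x := by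
    intro x
    have h1 : HasSum (fun κ : ℕ => (t*x) ^ κ / (κ.factorial : ℝ)) (Real.exp (t*x)) := by
      rw [Real.exp_eq_exp_ℝ]
      exact NormedSpace.expSeries_div_hasSum_exp (t*x)
    have hfe : (fun κ : ℕ => (t*x) ^ κ / (κ.factorial : ℝ)) = (fun κ : ℕ => c κ * x ^ κ) := by
      funext κ; simp only [hc]; rw [mul_pow]; ring
    rw [hfe] at h1
    have h3 := h1.mul_right (g x)
    have hfe2 : (fun κ : ℕ => c κ * x ^ κ * g x) = (fun κ : ℕ => F κ x) := by
      funext κ; simp only [hF]; ring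
    rw [hfe2] at h3
    exact h3.tsum_eq
  -- assemble
  show ∫ x in (0:ℝ)..1, Real.exp (t * x) * (ω / (ω + 3*η) * g x)
      = ω / (ω + 3*η) * ∑' κ : ℕ, c κ * M κ
  rw [intervalIntegral.integral_of_le zero_le_one]
  have hrw : ∀ x : ℝ, Real.exp (t*x) * (ω/(ω+3*η) * g x)
      = (ω/(ω+3*η)) * (Real.exp (t*x) * g x) := fun x => by ring
  simp_rw [hrw]
  rw [MeasureTheory.integral_const_mul]
  congr 1
  calc ∫ x in Ioc (0:ℝ) 1, Real.exp (t*x) * g x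
      = ∫ x in Ioc (0:ℝ) 1, ∑' κ : ℕ, F κ x := by
        refine setIntegral_congr_fun measurableSet_Ioc ?_
        intro x _; exact (hpt x).symm
    _ = ∑' κ : ℕ, ∫ x in Ioc (0:ℝ) 1, F κ x := swap.symm
    _ = ∑' κ : ℕ, c κ * M κ := by
        refine tsum_congr fun κ => ?_
        simp only [hF]
        rw [MeasureTheory.integral_const_mul, key κ]
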